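/- arXiv:1806.02234 — 2 statements merged into one kernel-verified Lean document; each statement's English description precedes it below -/
import Mathlib

section
/- Fix d ≥ 1, m ≥ d, and let p = ((m log n + ω(n))/n)^{1/C(m,d)} where ω(n) → ∞. Then asymptotically almost surely γ̃(Δ_d(G_d(n,p))) ≥ m + 1, i.e., the probability that the d-clique complex of the random complex G_d(n,p) has a strong dominating set of size at most m tends to 0 as n → ∞. -/
open scoped BigOperators ENNReal

/-- An abstract simplicial complex on vertex type `V`: a downward-closed set of finsets. -/
structure Cx (V : Type*) where
  faces : Set (Finset V)
  down : ∀ ⦃s t : Finset V⦄, s ∈ faces → t ⊆ s → t ∈ faces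

namespace Cx

variable {V : Type*}

/-- `fcount K i` is the number of `i`-dimensional faces of `K`. -/
noncomputable def fcount (K : Cx V) (i : ℕ) : ℕ :=
  Nat.card {s : Finset V // s ∈ K.faces ∧ s.card = i + 1}

/-- Induced subcomplex on a vertex subset `S`. -/
def induced (K : Cx V) (S : Finset V) : Cx V :=
  ⟨{s | s ∈ K.faces ∧ s ⊆ S}, fun s t hs hts => ⟨K.down hs.1 hts, hts.trans hs.2⟩⟩

/-- The `d`-skeleton of a complex. -/
def skel (K : Cx V) (d : ℕ) : Cx V :=
  ⟨{s | s ∈ K.faces ∧ s.card ≤ d + 1}, fun s t hs hts =>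
    ⟨K.down hs.1 hts, le_trans (Finset.card_le_card hts) hs.2⟩⟩

/-- Number of vertices of a complex. -/
noncomputable def vertCount (K : Cx V) : ℕ := Nat.card {v : V // {v} ∈ K.faces}

/-- The link of a vertex. -/
def linkCx [DecidableEq V] (K : Cx V) (v : V) : Cx V :=
  ⟨{τ | v ∉ τ ∧ insert v τ ∈ K.faces},
   fun s t hs hts => ⟨fun h => hs.1 (hts h), K.down hs.2 (Finset.insert_subset_insert v hts)⟩⟩

end Cx

/-- The `(k+1)`-fold join `∂Δ_{d+1} * ⋯ * ∂Δ_{d+1}` of boundaries of `d`-simplices: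
a set of vertices is a face iff it misses at least one vertex of each join factor. -/
def Kjoin (d k : ℕ) : Cx (Fin (k+1) × Fin (d+1)) :=
  ⟨{s | ∀ m : Fin (k+1), ∃ i : Fin (d+1), (m, i) ∉ s},
   fun s t hs hts m => (hs m).imp fun _ hi h => hi (hts h)⟩

/-- The `d`-clique complex of `K`: faces are all vertex sets all of whose
`(d+1)`-subsets are faces of `K`. -/
def cliqueCx (d : ℕ) (K : Cx V) : Cx V :=
  ⟨{s | ∀ t ⊆ s, t.card = d + 1 → t ∈ K.faces},
   fun s t hs hts u hut hu => hs u (hut.trans hts) hu⟩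

section Chains

variable {V : Type*} [LinearOrder V]

/-- Simplicial boundary operator (with the augmentation convention: the boundary of a
vertex is the empty set with coefficient 1, so cycles compute *reduced* homology). -/
noncomputable def bdry (γ : Finset V →₀ ℤ) : Finset V →₀ ℤ :=
  γ.sum fun s c => ∑ v ∈ s, Finsupp.single (s.erase v)
    (c * (-1) ^ ((s.sort (· ≤ ·)).idxOf v))

/-- `γ` is a `k`-chain of the complex `K`. -/
def IsChainOf (K : Cx V) (k : ℕ) (γ : Finset V →₀ ℤ) : Prop :=
  ∀ s ∈ γ.support, s ∈ K.faces ∧ s.card = k + 1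

/-- `γ` is a (reduced) `k`-cycle of `K`. -/
def IsCycleOf (K : Cx V) (k : ℕ) (γ : Finset V →₀ ℤ) : Prop :=
  IsChainOf K k γ ∧ bdry γ = 0

/-- `γ` is a `k`-boundary in `K`. -/
def IsBoundaryOf (K : Cx V) (k : ℕ) (γ : Finset V →₀ ℤ) : Prop :=
  ∃ β, IsChainOf K (k+1) β ∧ bdry β = γ

/-- `γ` is a nontrivial `k`-cycle: it represents a nonzero class in reduced homology
`H̃ₖ(K; ℤ)`. -/
def IsNontrivialCycle (K : Cx V) (k : ℕ) (γ : Finset V →₀ ℤ) : Prop :=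
  IsCycleOf K k γ ∧ ¬ IsBoundaryOf K k γ

/-- The vertex support of a chain. -/
def vsupp (γ : Finset V →₀ ℤ) : Finset V := γ.support.biUnion id

/-- The restriction `γ ∩ link(v)` of a chain to the link of a vertex `v`: a `(k-1)`-face
`τ` gets the (signed) coefficient of `τ ∪ {v}` in `γ`. -/
noncomputable def restrictLink (v : V) (γ : Finset V →₀ ℤ) : Finset V →₀ ℤ :=
  γ.sum fun s c => if v ∈ s then
    Finsupp.single (s.erase v) (c * (-1) ^ ((s.sort (· ≤ ·)).idxOf v)) else 0

end Chains

section Topology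

open Classical in
/-- The geometric realization of a complex on a finite vertex set, as a subset of `V → ℝ`. -/
noncomputable def realizationSet {V : Type*} [Fintype V] (K : Cx V) : Set (V → ℝ) :=
  {f | (∀ v, 0 ≤ f v) ∧ (∑ v, f v) = 1 ∧ (Finset.univ.filter fun v => f v ≠ 0) ∈ K.faces}

/-- `K` is `k`-connected: every continuous map from a sphere `S^i`, `i ≤ k`, to the
geometric realization of `K` is nullhomotopic. -/
def KConn {V : Type*} [Fintype V] (K : Cx V) (k : ℕ) : Prop :=
  ∀ i ≤ k, ∀ f : C(Metric.sphere (0 : EuclideanSpace ℝ (Fin (i+1))) 1, realizationSet K),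
    ∃ y, ContinuousMap.Homotopic f (ContinuousMap.const _ y)

end Topology

section Domination

variable {V : Type*} [DecidableEq V]

/-- `s̃p_K(A)`: the set of vertices `v` for which some face `σ ⊆ A` satisfies
`σ ∪ {v} ∉ K`. -/
def spTilde (K : Cx V) (A : Finset V) : Set V :=
  {v | ∃ σ : Finset V, σ ∈ K.faces ∧ σ ⊆ A ∧ insert v σ ∉ K.faces}

/-- `A` is a strong dominating set of `K`. -/
def IsStrongDom (K : Cx V) (A : Finset V) : Prop := ∀ v : V, v ∈ spTilde K A

/-- The strong domination number `γ̃(K)` (`⊤` if there is no strong dominating set). -/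
noncomputable def gammaTilde (K : Cx V) : ℕ∞ :=
  sInf {n : ℕ∞ | ∃ A : Finset V, IsStrongDom K A ∧ (A.card : ℕ∞) = n}

end Domination

section StrongConn

variable {V : Type*} [DecidableEq V]

/-- A facet: a maximal face. -/
def IsFacet (K : Cx V) (s : Finset V) : Prop :=
  s ∈ K.faces ∧ ∀ t ∈ K.faces, s ⊆ t → t = s

/-- `K` is a strongly connected `k`-dimensional complex: pure of dimension `k` and any
two facets are joined by a chain of facets, consecutive ones sharing a `(k-1)`-face. -/
def StronglyConnected (K : Cx V) (k : ℕ) : Prop :=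
  (∃ s, s ∈ K.faces ∧ s.card = k + 1) ∧
  (∀ s, IsFacet K s → s.card = k + 1) ∧
  ∀ s t, IsFacet K s → IsFacet K t →
    Relation.ReflTransGen (fun a b => IsFacet K a ∧ IsFacet K b ∧ (a ∩ b).card = k) s t

end StrongConn

section Random

open MeasureTheory

/-- Bernoulli measure on `Bool` with parameter `p` (truncated at 1). -/
noncomputable def bern (p : ℝ≥0∞) : Measure Bool :=
  (PMF.bernoulli (min p 1).toNNReal
    (by simpa using ENNReal.toNNReal_mono ENNReal.one_ne_top (min_le_right p 1))).toMeasure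

instance (p : ℝ≥0∞) : IsProbabilityMeasure (bern p) := by
  unfold bern; infer_instance

/-- Sample space for the random complex `G_d(n,p)`: a coin for each potential `d`-face. -/
abbrev RandOmega (d n : ℕ) := {s : Finset (Fin n) // s.card = d + 1} → Bool

/-- The law of `G_d(n,p)`: independent Bernoulli(p) coins for the `d`-faces. -/
noncomputable def randMeasure (d n : ℕ) (p : ℝ≥0∞) : Measure (RandOmega d n) :=
  Measure.pi fun _ => bern p

/-- The random `d`-complex `G_d(n,p)` determined by the sample `ω`: full
`(d-1)`-skeleton, and the `d`-faces chosen by `ω`. -/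
def randCx (d n : ℕ) (ω : RandOmega d n) : Cx (Fin n) :=
  ⟨{s | s.card ≤ d ∨ ∃ h : s.card = d + 1, ω ⟨s, h⟩ = true}, by
    rintro s t hs hts
    rcases hs with h | ⟨h, hω⟩
    · exact Or.inl (le_trans (Finset.card_le_card hts) h)
    · have hle := Finset.card_le_card hts
      rcases eq_or_lt_of_le hle with heq | hlt
      · have : t = s := Finset.eq_of_subset_of_card_le hts (le_of_eq heq.symm)
        subst this; exact Or.inr ⟨h, hω⟩
      · exact Or.inl (by omega)⟩

end Random
section Aux
open MeasureTheory

lemma meas_all' {α : Type*} [MeasurableSpace α] [Countable α] [MeasurableSingletonClass α]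
    (s : Set α) : MeasurableSet s := s.to_countable.measurableSet

lemma bern_true (p : ℝ≥0∞) : bern p {true} = min p 1 := by
  unfold bern
  rw [PMF.toMeasure_apply_singleton _ _ (measurableSet_singleton _)]
  show ((min p 1).toNNReal : ℝ≥0∞) = min p 1
  exact ENNReal.coe_toNNReal (ne_top_of_le_ne_top ENNReal.one_ne_top (min_le_right _ _))

lemma blocks_le {V : Type*} [DecidableEq V] (ν : Measure Bool) [IsProbabilityMeasure ν]
    (T : Finset V) :
    ∀ (ι : Type) [Fintype ι] (B : V → Finset ι),
      (∀ v ∈ T, ∀ u ∈ T, v ≠ u → Disjoint (B v) (B u)) →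
      Measure.pi (fun _ : ι => ν) {ω : ι → Bool | ∀ v ∈ T, ∃ i ∈ B v, ω i = false}
        ≤ ∏ v ∈ T, (1 - ν {true} ^ (B v).card) := by
  classical
  induction T using Finset.cons_induction with
  | empty => intro ι _ B _; simp
  | cons v₀ T' hv IH =>
    intro ι _ B hdisj
    set q := ν {true} with hq
    set p : ι → Prop := fun i => i ∈ B v₀ with hp
    have hmp := measurePreserving_piEquivPiSubtypeProd (fun _ : ι => ν) p
    set e := MeasurableEquiv.piEquivPiSubtypeProd (fun _ : ι => Bool) p with he
    set S := {ω : ι → Bool | ∀ v ∈ Finset.cons v₀ T' hv, ∃ i ∈ B v, ω i = false} with hS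
    set S₁ : Set ({i // p i} → Bool) := {f | ∃ j : {i // p i}, f j = false} with hS₁
    set B' : V → Finset {i // ¬ p i} := fun v => Finset.univ.filter (fun j => j.1 ∈ B v) with hB'
    set S₂ : Set ({i // ¬ p i} → Bool) := {g | ∀ v ∈ T', ∃ j ∈ B' v, g j = false} with hS₂
    have hsub : e '' S ⊆ S₁ ×ˢ S₂ := by
      rintro x ⟨ω, hω, rfl⟩
      constructor
      · obtain ⟨i, hi, hfalse⟩ := hω v₀ (Finset.mem_cons_self _ _)
        exact ⟨⟨i, hi⟩, hfalse⟩
      · intro v hvT'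
        obtain ⟨i, hi, hfalse⟩ := hω v (Finset.mem_cons_of_mem hvT')
        have hne : v ≠ v₀ := by rintro rfl; exact hv hvT'
        have hiv : ¬ p i := fun hip =>
          (Finset.disjoint_left.1 (hdisj v (Finset.mem_cons_of_mem hvT') v₀
            (Finset.mem_cons_self _ _) hne)) hi hip
        exact ⟨⟨i, hiv⟩, Finset.mem_filter.2 ⟨Finset.mem_univ _, hi⟩, hfalse⟩
    have hms : MeasurableSet (e '' S) := meas_all' _
    have h2 := hmp.measure_preimage hms.nullMeasurableSet
    rw [Set.preimage_image_eq S e.injective] at h2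
    have hq1 : q ≤ 1 := prob_le_one
    have hμ1 : (Measure.pi fun _ : Subtype p => ν) S₁ = 1 - q ^ (B v₀).card := by
      have hcompl : S₁ = (Set.pi Set.univ (fun _ : {i // p i} => ({true} : Set Bool)))ᶜ := by
        ext f
        simp only [hS₁, Set.mem_setOf_eq, Set.mem_compl_iff, Set.mem_pi, Set.mem_univ,
          true_implies, Set.mem_singleton_iff, not_forall, Bool.not_eq_true]
      rw [hcompl, prob_compl_eq_one_sub (meas_all' _), Measure.pi_pi]
      congr 1
      rw [Finset.prod_const, Finset.card_univ]
      congr 1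
      exact Fintype.card_coe (B v₀)
    have hμ2 : (Measure.pi fun _ : {i // ¬ p i} => ν) S₂
        ≤ ∏ v ∈ T', (1 - q ^ (B v).card) := by
      refine le_trans (IH _ B' ?_) ?_
      · intro v hv1 u hu1 hne
        rw [Finset.disjoint_left]
        intro j hj1 hj2
        exact Finset.disjoint_left.1
          (hdisj v (Finset.mem_cons_of_mem hv1) u (Finset.mem_cons_of_mem hu1) hne)
          (Finset.mem_filter.1 hj1).2 (Finset.mem_filter.1 hj2).2
      · refine Finset.prod_le_prod' fun v _ => ?_
        refine tsub_le_tsub_left (pow_le_pow_of_le_one zero_le hq1 ?_) 1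
        refine Finset.card_le_card_of_injOn (fun j => j.1) ?_ ?_
        · intro j hj; exact (Finset.mem_filter.1 hj).2
        · intro a _ b _ hab; exact Subtype.ext hab
    refine le_trans (le_of_eq h2) (le_trans (measure_mono hsub) ?_)
    rw [Measure.prod_prod, Finset.prod_cons]
    refine mul_le_mul' ?_ ?_
    · convert hμ1.le using 2
      congr!
    · convert hμ2 using 2

/-- The block of coins at vertex `v` relative to `A`. -/
def Bk (d n : ℕ) (A : Finset (Fin n)) (v : Fin n) : Finset {s : Finset (Fin n) // s.card = d + 1} :=
  Finset.univ.filter (fun i => v ∈ i.1 ∧ i.1 ⊆ insert v A)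

lemma dom_subset (d n : ℕ) (A : Finset (Fin n)) :
    {ω : RandOmega d n | IsStrongDom (cliqueCx d (randCx d n ω)) A}
      ⊆ {ω : RandOmega d n | ∀ v ∈ Aᶜ, ∃ i ∈ Bk d n A v, ω i = false} := by
  intro ω hω v _
  obtain ⟨σ, hσf, hσA, hins⟩ := hω v
  have hins' : ¬ ∀ t ⊆ insert v σ, t.card = d + 1 → t ∈ (randCx d n ω).faces := hins
  push_neg at hins'
  obtain ⟨t, htsub, htc, htnot⟩ := hins'
  have hvt : v ∈ t := by
    by_contra hvt
    exact htnot (hσf t ((Finset.subset_insert_iff_of_notMem hvt).1 htsub) htc)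
  have hfalse : ω ⟨t, htc⟩ = false := by
    rcases Bool.eq_false_or_eq_true (ω ⟨t, htc⟩) with h | h
    · exact absurd (Or.inr ⟨htc, h⟩) htnot
    · exact h
  refine ⟨⟨t, htc⟩, Finset.mem_filter.2 ⟨Finset.mem_univ _, hvt, ?_⟩, hfalse⟩
  exact htsub.trans (Finset.insert_subset_insert v hσA)

lemma Bk_card_le {d n m : ℕ} (A : Finset (Fin n)) (hA : A.card ≤ m) (v : Fin n) :
    (Bk d n A v).card ≤ m.choose d := by
  have h1 : (Bk d n A v).card ≤ (A.powersetCard d).card := by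
    refine Finset.card_le_card_of_injOn (fun i => i.1.erase v) ?_ ?_
    · intro i hi
      obtain ⟨_, hvi, hsub⟩ := Finset.mem_filter.1 hi
      refine Finset.mem_powersetCard.2 ⟨Finset.subset_insert_iff.1 hsub, ?_⟩
      rw [Finset.card_erase_of_mem hvi, i.2]
      omega
    · intro a ha b hb hab
      obtain ⟨_, hva, _⟩ := Finset.mem_filter.1 ha
      obtain ⟨_, hvb, _⟩ := Finset.mem_filter.1 hb
      apply Subtype.ext
      have hab' : (a.1).erase v = (b.1).erase v := hab
      rw [← Finset.insert_erase hva, ← Finset.insert_erase hvb, hab']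
  rw [Finset.card_powersetCard] at h1
  exact le_trans h1 (Nat.choose_le_choose d hA)

lemma Bk_disj {d n : ℕ} (A : Finset (Fin n)) {v u : Fin n}
    (hu : u ∈ Aᶜ) (hne : v ≠ u) : Disjoint (Bk d n A v) (Bk d n A u) := by
  rw [Finset.disjoint_left]
  rintro i hi1 hi2
  obtain ⟨_, _, hsubv⟩ := Finset.mem_filter.1 hi1
  obtain ⟨_, hui, _⟩ := Finset.mem_filter.1 hi2
  rcases Finset.mem_insert.1 (hsubv hui) with h | h
  · exact hne h.symm
  · exact Finset.mem_compl.1 hu h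

lemma perA {d n m : ℕ} (p : ℝ≥0∞) (A : Finset (Fin n)) (hA : A.card ≤ m) :
    randMeasure d n p {ω | IsStrongDom (cliqueCx d (randCx d n ω)) A}
      ≤ (1 - (min p 1) ^ (m.choose d)) ^ (n - m) := by
  have hb := blocks_le (bern p) Aᶜ _ (Bk d n A)
    (fun v _ u hu hne => Bk_disj A hu hne)
  rw [bern_true] at hb
  refine le_trans (measure_mono (dom_subset d n A)) (le_trans hb ?_)
  calc ∏ v ∈ Aᶜ, (1 - min p 1 ^ (Bk d n A v).card)
      ≤ ∏ _v ∈ Aᶜ, (1 - min p 1 ^ m.choose d) :=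
        Finset.prod_le_prod' fun v _ =>
          tsub_le_tsub_left
            (pow_le_pow_of_le_one zero_le (min_le_right _ _) (Bk_card_le A hA v)) 1
    _ = (1 - min p 1 ^ m.choose d) ^ Aᶜ.card := Finset.prod_const _
    _ ≤ (1 - min p 1 ^ m.choose d) ^ (n - m) := by
        refine pow_le_pow_of_le_one zero_le tsub_le_self ?_
        rw [Finset.card_compl, Fintype.card_fin]
        exact Nat.sub_le_sub_left hA n

lemma count_le {n m : ℕ} (hn : 1 ≤ n) :
    (Finset.univ.filter (fun A : Finset (Fin n) => A.card ≤ m)).card ≤ (m + 1) * n ^ m := by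
  classical
  have hsub : Finset.univ.filter (fun A : Finset (Fin n) => A.card ≤ m)
      ⊆ (Finset.range (m + 1)).biUnion (fun k => Finset.powersetCard k Finset.univ) := by
    intro A hA
    have h := (Finset.mem_filter.1 hA).2
    simp only [Finset.mem_biUnion, Finset.mem_range, Finset.mem_powersetCard]
    exact ⟨A.card, by omega, Finset.subset_univ A, rfl⟩
  refine le_trans (Finset.card_le_card hsub) (le_trans Finset.card_biUnion_le ?_)
  calc ∑ k ∈ Finset.range (m + 1), (Finset.powersetCard k (Finset.univ : Finset (Fin n))).card
      = ∑ k ∈ Finset.range (m + 1), n.choose k := by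
        simp [Finset.card_powersetCard]
    _ ≤ ∑ _k ∈ Finset.range (m + 1), n ^ m := by
        refine Finset.sum_le_sum fun k hk => ?_
        exact le_trans (Nat.choose_le_pow n k)
          (Nat.pow_le_pow_right hn (Nat.lt_succ_iff.1 (Finset.mem_range.1 hk)))
    _ = (m + 1) * n ^ m := by
        rw [Finset.sum_const, Finset.card_range, smul_eq_mul]

lemma union_bound {d n m : ℕ} (p : ℝ≥0∞) (hn : 1 ≤ n) :
    randMeasure d n p
      {ω | ∃ A : Finset (Fin n), A.card ≤ m ∧ IsStrongDom (cliqueCx d (randCx d n ω)) A}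
      ≤ ((m + 1) * n ^ m : ℕ) * (1 - (min p 1) ^ (m.choose d)) ^ (n - m) := by
  classical
  set bnd : ℝ≥0∞ := (1 - (min p 1) ^ (m.choose d)) ^ (n - m) with hbnd
  have hcover : {ω : RandOmega d n |
        ∃ A : Finset (Fin n), A.card ≤ m ∧ IsStrongDom (cliqueCx d (randCx d n ω)) A}
      = ⋃ A : Finset (Fin n),
          {ω | A.card ≤ m ∧ IsStrongDom (cliqueCx d (randCx d n ω)) A} := by
    ext ω; simp [Set.mem_iUnion]
  rw [hcover]
  refine le_trans (measure_iUnion_le _) ?_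
  rw [tsum_fintype]
  have hterm : ∀ A : Finset (Fin n),
      randMeasure d n p {ω | A.card ≤ m ∧ IsStrongDom (cliqueCx d (randCx d n ω)) A}
        ≤ if A.card ≤ m then bnd else 0 := by
    intro A
    by_cases hA : A.card ≤ m
    · rw [if_pos hA]
      refine le_trans (measure_mono ?_) (perA p A hA)
      intro ω hω; exact hω.2
    · rw [if_neg hA]
      have : {ω : RandOmega d n | A.card ≤ m ∧ IsStrongDom (cliqueCx d (randCx d n ω)) A}
          = ∅ := by
        ext ω; simp [hA]
      rw [this, measure_empty]
  refine le_trans (Finset.sum_le_sum fun A _ => hterm A) ?_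
  rw [← Finset.sum_filter]
  rw [Finset.sum_const, nsmul_eq_mul]
  refine mul_le_mul' ?_ le_rfl
  exact_mod_cast Nat.cast_le.2 (count_le hn)

end Aux
section Aux2
open MeasureTheory Filter

lemma bnd_le {C : ℕ} (hC : 1 ≤ C) (r : ℝ) :
    ((1 : ℝ≥0∞) - (min (ENNReal.ofReal (r ^ ((1:ℝ)/C))) 1) ^ C)
      ≤ ENNReal.ofReal (Real.exp (-(min r 1))) := by
  rcases lt_or_ge 1 r with h1 | h1
  · have h2 : (1:ℝ) ≤ r ^ ((1:ℝ)/C) := Real.one_le_rpow h1.le (by positivity)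
    rw [min_eq_right (ENNReal.one_le_ofReal.2 h2), one_pow, tsub_self]
    exact zero_le
  rcases le_or_gt r 0 with h0 | h0
  · refine le_trans tsub_le_self (ENNReal.one_le_ofReal.2 (Real.one_le_exp ?_))
    rw [min_eq_left (le_trans h0 zero_le_one)]
    linarith
  · have hmin : min r 1 = r := min_eq_left h1
    have hr1 : r ^ ((1:ℝ)/C) ≤ 1 := Real.rpow_le_one h0.le h1 (by positivity)
    rw [min_eq_left (ENNReal.ofReal_le_one.2 hr1), ← ENNReal.ofReal_pow (by positivity), hmin]
    have hpow : (r ^ ((1:ℝ)/C)) ^ C = r := by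
      rw [← Real.rpow_natCast (r ^ ((1:ℝ)/C)) C, ← Real.rpow_mul h0.le]
      rw [one_div, inv_mul_cancel₀ (by exact_mod_cast (by omega : C ≠ 0)), Real.rpow_one]
    rw [hpow]
    have h2 : (1:ℝ) - r ≤ Real.exp (-r) := by nlinarith [Real.add_one_le_exp (-r)]
    refine le_trans ?_ (ENNReal.ofReal_le_ofReal h2)
    rw [tsub_le_iff_right, ← ENNReal.ofReal_add (by linarith) h0.le]
    simp

lemma g_tendsto (m : ℕ) (w : ℕ → ℝ) (hw : Tendsto w atTop atTop) :
    Tendsto (fun n : ℕ => ((n - m : ℕ) : ℝ)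
        * min (((m : ℝ) * Real.log n + w n) / n) 1 - m * Real.log n) atTop atTop := by
  rw [tendsto_atTop]
  intro X
  have hlog : ∀ᶠ x : ℝ in atTop, ‖Real.log x‖ ≤ (1/(4*((m:ℝ)+1))) * ‖x‖ :=
    Real.isLittleO_log_id_atTop.def (by positivity)
  have h3 := (tendsto_natCast_atTop_atTop (R := ℝ)).eventually hlog
  filter_upwards [eventually_ge_atTop (2*m+2),
    hw.eventually_ge_atTop (2*|X| + 2*(m:ℝ)^2 + 2), h3,
    (tendsto_natCast_atTop_atTop (R := ℝ)).eventually_ge_atTop (4*(|X| + m + 1))]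
    with n hn1 hn2 hn3 hn4
  set N : ℝ := (n:ℝ) with hN
  have hN1 : (1:ℝ) ≤ N := by
    show (1:ℝ) ≤ (n:ℝ)
    exact_mod_cast (by omega : 1 ≤ n)
  have hcast : ((n - m : ℕ):ℝ) = N - m := by
    rw [Nat.cast_sub (by omega)]
  have hlogn : 0 ≤ Real.log N := Real.log_nonneg hN1
  have hmlog : (m:ℝ) * Real.log N ≤ N/4 := by
    rw [Real.norm_eq_abs, Real.norm_eq_abs, abs_of_nonneg hlogn,
      abs_of_nonneg (by linarith : (0:ℝ) ≤ N), one_div, inv_mul_eq_div] at hn3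
    have hm0 : (0:ℝ) ≤ m := Nat.cast_nonneg m
    have h4 : Real.log N * (4*((m:ℝ)+1)) ≤ N := (le_div_iff₀ (by positivity)).1 hn3
    nlinarith [h4, hlogn]
  set r : ℝ := ((m : ℝ) * Real.log N + w n) / N with hr
  rw [hcast]
  rcases le_or_gt r 1 with hrn | hrn
  · rw [min_eq_left hrn]
    have hNr : N * r = (m:ℝ) * Real.log N + w n := by
      rw [hr]; field_simp
    have hr0 : 0 ≤ r := by
      apply div_nonneg _ (by linarith)
      have : 0 ≤ w n := by nlinarith [abs_nonneg X, sq_nonneg (m:ℝ)]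
      positivity
    have hmr : (m:ℝ) * r ≤ m := by
      nlinarith [Nat.cast_nonneg (α := ℝ) m]
    have : (N - m) * r - (m:ℝ) * Real.log N = w n - (m:ℝ) * r := by
      nlinarith [hNr]
    rw [this]
    nlinarith [abs_nonneg X, le_abs_self X, sq_nonneg (m:ℝ)]
  · rw [min_eq_right hrn.le]
    have : 4*(|X| + (m:ℝ) + 1) ≤ N := hn4
    nlinarith [le_abs_self X]

end Aux2
/-- If `p = ((m log n + ω(n))/n)^{1/C(m,d)}` with `ω(n) → ∞`, then
a.a.s. `γ̃(Δ_d(G_d(n,p))) ≥ m + 1`: the probability that the `d`-clique complex of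
`G_d(n,p)` has a strong dominating set of size at most `m` tends to `0`. -/
theorem stmt8 (d m : ℕ) (hd : 1 ≤ d) (hm : d ≤ m) (w : ℕ → ℝ)
    (hw : Filter.Tendsto w Filter.atTop Filter.atTop) :
    Filter.Tendsto (fun n : ℕ =>
      randMeasure d n (ENNReal.ofReal ((((m : ℝ) * Real.log n + w n) / n) ^ ((1:ℝ) / (m.choose d))))
        {ω | ∃ A : Finset (Fin n), A.card ≤ m ∧ IsStrongDom (cliqueCx d (randCx d n ω)) A})
      Filter.atTop (nhds 0) := by
  classical
  have hC : 1 ≤ m.choose d := Nat.choose_pos hm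
  set C : ℕ := m.choose d with hCdef
  have hg := g_tendsto m w hw
  set g : ℕ → ℝ := fun n => ((n - m : ℕ) : ℝ)
      * min (((m : ℝ) * Real.log n + w n) / n) 1 - m * Real.log n with hgdef
  have hbound : ∀ n : ℕ, 1 ≤ n →
      randMeasure d n (ENNReal.ofReal ((((m : ℝ) * Real.log n + w n) / n) ^ ((1:ℝ) / C)))
        {ω | ∃ A : Finset (Fin n), A.card ≤ m ∧ IsStrongDom (cliqueCx d (randCx d n ω)) A}
        ≤ ENNReal.ofReal (((m:ℝ) + 1) * Real.exp (-(g n))) := by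
    intro n hn
    set r : ℝ := ((m : ℝ) * Real.log n + w n) / n with hrdef
    refine le_trans (union_bound _ hn) ?_
    have h1 : ((1 : ℝ≥0∞) - (min (ENNReal.ofReal (r ^ ((1:ℝ)/C))) 1) ^ C) ^ (n - m)
        ≤ ENNReal.ofReal (Real.exp (-(((n - m : ℕ):ℝ) * min r 1))) := by
      refine le_trans (pow_le_pow_left' (bnd_le hC r) (n-m)) ?_
      rw [← ENNReal.ofReal_pow (Real.exp_nonneg _) (n-m), ← Real.exp_nat_mul, mul_neg]
    refine le_trans (mul_le_mul' le_rfl h1) ?_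
    rw [← ENNReal.ofReal_natCast, ← ENNReal.ofReal_mul (Nat.cast_nonneg _)]
    refine ENNReal.ofReal_le_ofReal ?_
    have hnpos : (0:ℝ) < n := by exact_mod_cast (by omega : 0 < n)
    have hexp : Real.exp (-(g n)) = (n:ℝ)^m * Real.exp (-(((n - m : ℕ):ℝ) * min r 1)) := by
      have : -(g n) = (m:ℕ) * Real.log n + -(((n - m : ℕ):ℝ) * min r 1) := by
        rw [hgdef]; push_cast [Nat.cast_sub]; ring
      rw [this, Real.exp_add, Real.exp_nat_mul, Real.exp_log hnpos]
    rw [hexp]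
    push_cast
    nlinarith [Real.exp_nonneg (-(((n - m : ℕ):ℝ) * min r 1)), pow_nonneg (le_of_lt hnpos) m]
  have h0 : Filter.Tendsto (fun n : ℕ => ENNReal.ofReal (((m:ℝ)+1) * Real.exp (-(g n))))
      Filter.atTop (nhds 0) := by
    have h2 : Filter.Tendsto (fun n : ℕ => Real.exp (-(g n))) Filter.atTop (nhds 0) :=
      Real.tendsto_exp_atBot.comp (Filter.tendsto_neg_atTop_atBot.comp hg)
    have h1 : Filter.Tendsto (fun n : ℕ => ((m:ℝ)+1) * Real.exp (-(g n)))
        Filter.atTop (nhds 0) := by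
      simpa using h2.const_mul ((m:ℝ)+1)
    have h3 := ENNReal.tendsto_ofReal h1
    simpa using h3
  refine tendsto_of_tendsto_of_tendsto_of_le_of_le' tendsto_const_nhds h0 ?_ ?_
  · exact Filter.Eventually.of_forall fun n => zero_le
  · filter_upwards [Filter.eventually_ge_atTop 1] with n hn
    exact hbound n hn
end

section
/- Let Δ be a strongly connected k-dimensional simplicial complex on v vertices. Then the number of d-dimensional faces of Δ is at least C(k+1, d+1) + C(k,d)·(v − k − 1), for any 0 ≤ d ≤ k. -/
open scoped BigOperators ENNReal

section Stmt12Aux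
variable {V : Type*} [DecidableEq V]

/-- Facets reachable from `σ₀` in at most `n` ridge-sharing steps. -/
def sreach (Δ : Cx V) (k : ℕ) (σ₀ : Finset V) : ℕ → Set (Finset V)
  | 0 => {σ₀}
  | (n+1) => sreach Δ k σ₀ n ∪ {τ | IsFacet Δ τ ∧ ∃ τ' ∈ sreach Δ k σ₀ n, (τ ∩ τ').card = k}

lemma sreach_facet {Δ : Cx V} {k : ℕ} {σ₀ : Finset V} (h0 : IsFacet Δ σ₀) :
    ∀ n, ∀ τ ∈ sreach Δ k σ₀ n, IsFacet Δ τ := by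
  intro n
  induction n with
  | zero => rintro τ rfl; exact h0
  | succ n ih => rintro τ (hτ | hτ); exacts [ih τ hτ, hτ.1]

lemma sreach_of_rtg {Δ : Cx V} {k : ℕ} {σ₀ τ : Finset V}
    (h : Relation.ReflTransGen (fun a b => IsFacet Δ a ∧ IsFacet Δ b ∧ (a ∩ b).card = k) σ₀ τ) :
    ∃ n, τ ∈ sreach Δ k σ₀ n := by
  induction h with
  | refl => exact ⟨0, rfl⟩
  | tail hab hbc ih =>
      obtain ⟨n, hn⟩ := ih
      exact ⟨n + 1, Or.inr ⟨hbc.2.1, _, hn, by rw [Finset.inter_comm]; exact hbc.2.2⟩⟩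

open Classical in
/-- Rank of a vertex: least `n` with `u` in a facet reachable in `n` steps. -/
noncomputable def nval (Δ : Cx V) (k : ℕ) (σ₀ : Finset V) (u : V) : ℕ :=
  if h : ∃ m, ∃ τ ∈ sreach Δ k σ₀ m, u ∈ τ then Nat.find h else 0

open Classical in
lemma exists_B_stmt12 {Δ : Cx V} {k : ℕ} {σ₀ : Finset V} (h0 : IsFacet Δ σ₀)
    (hconn : ∀ s t, IsFacet Δ s → IsFacet Δ t →
      Relation.ReflTransGen (fun a b => IsFacet Δ a ∧ IsFacet Δ b ∧ (a ∩ b).card = k) s t)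
    (hext : ∀ s ∈ Δ.faces, ∃ t, IsFacet Δ t ∧ s ⊆ t)
    {u : V} (hu : {u} ∈ Δ.faces) (huσ : u ∉ σ₀) :
    ∃ B : Finset V, B.card = k ∧ u ∉ B ∧ insert u B ∈ Δ.faces ∧
      ∀ w ∈ B, nval Δ k σ₀ w < nval Δ k σ₀ u := by
  obtain ⟨τ, hτf, hτsub⟩ := hext {u} hu
  have hex : ∃ m, ∃ τ ∈ sreach Δ k σ₀ m, u ∈ τ := by
    obtain ⟨n, hn⟩ := sreach_of_rtg (hconn σ₀ τ h0 hτf)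
    exact ⟨n, τ, hn, hτsub (Finset.mem_singleton_self u)⟩
  have hnu : nval Δ k σ₀ u = Nat.find hex := by rw [nval, dif_pos hex]
  obtain ⟨τ₁, hτ₁, huτ₁⟩ := Nat.find_spec hex
  have hpos : Nat.find hex ≠ 0 := by
    intro h0'
    rw [h0'] at hτ₁
    exact huσ (hτ₁ ▸ huτ₁)
  obtain ⟨m, hm⟩ : ∃ m, Nat.find hex = m + 1 := ⟨Nat.find hex - 1, by omega⟩
  rw [hm] at hτ₁
  rcases hτ₁ with hτ₁ | ⟨hτ₁f, τ', hτ', hcard⟩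
  · exact absurd ⟨τ₁, hτ₁, huτ₁⟩ (Nat.find_min hex (by omega))
  · have huτ' : u ∉ τ' := fun huτ' => Nat.find_min hex (m := m) (by omega) ⟨τ', hτ', huτ'⟩
    refine ⟨τ₁ ∩ τ', hcard, fun hmem => huτ' (Finset.mem_inter.1 hmem).2, ?_, ?_⟩
    · have hsub : insert u (τ₁ ∩ τ') ⊆ τ₁ :=
        Finset.insert_subset huτ₁ Finset.inter_subset_left
      exact Δ.down hτ₁f.1 hsub
    · intro w hw
      have hwτ' : w ∈ τ' := (Finset.mem_inter.1 hw).2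
      have hexw : ∃ m', ∃ τ ∈ sreach Δ k σ₀ m', w ∈ τ := ⟨m, τ', hτ', hwτ'⟩
      have hnw : nval Δ k σ₀ w = Nat.find hexw := by rw [nval, dif_pos hexw]
      rw [hnw, hnu, hm]
      exact Nat.lt_succ_of_le (Nat.find_le ⟨τ', hτ', hwτ'⟩)

end Stmt12Aux

/-- A strongly connected `k`-dimensional complex on `v` vertices
has at least `C(k+1, d+1) + C(k,d)·(v − k − 1)` faces of dimension `d`, for `d ≤ k`. -/
theorem stmt12 {V : Type*} [Fintype V] [DecidableEq V] (Δ : Cx V) (k d : ℕ)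
    (hd : d ≤ k) (h : StronglyConnected Δ k) :
    (k+1).choose (d+1) + k.choose d * (Δ.vertCount - (k+1)) ≤ Δ.fcount d := by
  classical
  obtain ⟨⟨σ₀, hσ₀f, hσ₀c⟩, hpure, hconn⟩ := h
  -- every face extends to a facet
  have hext : ∀ s ∈ Δ.faces, ∃ t, IsFacet Δ t ∧ s ⊆ t := by
    intro s hs
    obtain ⟨t, ht, hmax⟩ := Set.Finite.exists_maximalFor id {t | t ∈ Δ.faces ∧ s ⊆ t}
      (Set.toFinite _) ⟨s, hs, Finset.Subset.refl s⟩
    exact ⟨t, ⟨ht.1, fun t' ht' hst' =>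
      Finset.Subset.antisymm (hmax ⟨ht', ht.2.trans hst'⟩ (Finset.le_iff_subset.2 hst')) hst'⟩, ht.2⟩
  have hσ₀facet : IsFacet Δ σ₀ := by
    refine ⟨hσ₀f, fun t ht hst => ?_⟩
    obtain ⟨t', ht', htt'⟩ := hext t ht
    have h1 : σ₀ = t' := Finset.eq_of_subset_of_card_le (hst.trans htt')
      (le_of_eq ((hpure t' ht').trans hσ₀c.symm))
    exact Finset.Subset.antisymm (h1 ▸ htt') hst
  -- choose for each vertex outside σ₀ its supporting k-set
  have hB' : ∀ u : V, ∃ B : Finset V, ({u} ∈ Δ.faces ∧ u ∉ σ₀) →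
      B.card = k ∧ u ∉ B ∧ insert u B ∈ Δ.faces ∧
      ∀ w ∈ B, nval Δ k σ₀ w < nval Δ k σ₀ u := by
    intro u
    by_cases hc : {u} ∈ Δ.faces ∧ u ∉ σ₀
    · obtain ⟨B, hB⟩ := exists_B_stmt12 hσ₀facet hconn hext hc.1 hc.2
      exact ⟨B, fun _ => hB⟩
    · exact ⟨∅, fun hc' => absurd hc' hc⟩
  choose B hB using hB'
  set Vert : Finset V := Finset.univ.filter (fun v => {v} ∈ Δ.faces) with hVert
  have hσVert : σ₀ ⊆ Vert := by
    intro x hx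
    rw [hVert, Finset.mem_filter]
    exact ⟨Finset.mem_univ x, Δ.down hσ₀f (Finset.singleton_subset_iff.2 hx)⟩
  set Vout : Finset V := Vert \ σ₀ with hVoutdef
  have hVoutmem : ∀ u ∈ Vout, {u} ∈ Δ.faces ∧ u ∉ σ₀ := by
    intro u hu
    rw [hVoutdef, Finset.mem_sdiff, hVert, Finset.mem_filter] at hu
    exact ⟨hu.1.2, hu.2⟩
  set T : V → Finset (Finset V) := fun u => ((B u).powersetCard d).image (insert u) with hT
  have hTmem : ∀ u ∈ Vout, ∀ s ∈ T u, u ∈ s ∧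
      (∀ w ∈ s, w ≠ u → nval Δ k σ₀ w < nval Δ k σ₀ u) ∧ s ∈ Δ.faces ∧ s.card = d + 1 := by
    intro u hu s hs
    obtain ⟨hBc, hBu, hBf, hBlt⟩ := hB u (hVoutmem u hu)
    rw [hT] at hs
    simp only [Finset.mem_image, Finset.mem_powersetCard] at hs
    obtain ⟨t, ⟨hts, htc⟩, rfl⟩ := hs
    have hut : u ∉ t := fun hmem => hBu (hts hmem)
    refine ⟨Finset.mem_insert_self u t, ?_, ?_, ?_⟩
    · intro w hw hwu
      rcases Finset.mem_insert.1 hw with h' | h'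
      · exact absurd h' hwu
      · exact hBlt w (hts h')
    · exact Δ.down hBf (Finset.insert_subset_insert u hts)
    · rw [Finset.card_insert_of_notMem hut, htc]
  set T0 : Finset (Finset V) := σ₀.powersetCard (d+1) with hT0
  set Total : Finset (Finset V) := T0 ∪ Vout.biUnion T with hTot
  -- Total consists of d-faces
  have hTotal_sub : Total ⊆ Finset.univ.filter (fun s => s ∈ Δ.faces ∧ s.card = d+1) := by
    intro s hs
    rw [hTot, Finset.mem_union] at hs
    rw [Finset.mem_filter]
    refine ⟨Finset.mem_univ s, ?_⟩
    rcases hs with hs | hs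
    · rw [hT0, Finset.mem_powersetCard] at hs
      exact ⟨Δ.down hσ₀f hs.1, hs.2⟩
    · obtain ⟨u, hu, hsu⟩ := Finset.mem_biUnion.1 hs
      exact ⟨(hTmem u hu s hsu).2.2.1, (hTmem u hu s hsu).2.2.2⟩
  -- cardinalities
  have hT0card : T0.card = (k+1).choose (d+1) := by
    rw [hT0, Finset.card_powersetCard, hσ₀c]
  have hTcard : ∀ u ∈ Vout, (T u).card = k.choose d := by
    intro u hu
    obtain ⟨hBc, hBu, -, -⟩ := hB u (hVoutmem u hu)
    rw [hT]
    rw [Finset.card_image_of_injOn, Finset.card_powersetCard, hBc]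
    intro t1 h1 t2 h2 he
    simp only [Finset.mem_coe, Finset.mem_powersetCard] at h1 h2
    have hu1 : u ∉ t1 := fun hmem => hBu (h1.1 hmem)
    have hu2 : u ∉ t2 := fun hmem => hBu (h2.1 hmem)
    rw [← Finset.erase_insert hu1, ← Finset.erase_insert hu2, he]
  have hdisj0 : Disjoint T0 (Vout.biUnion T) := by
    rw [Finset.disjoint_left]
    intro s hs0 hsb
    obtain ⟨u, hu, hsu⟩ := Finset.mem_biUnion.1 hsb
    rw [hT0, Finset.mem_powersetCard] at hs0
    exact (hVoutmem u hu).2 (hs0.1 (hTmem u hu s hsu).1)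
  have hdisj : ∀ x ∈ Vout, ∀ y ∈ Vout, x ≠ y → Disjoint (T x) (T y) := by
    intro x hx y hy hxy
    rw [Finset.disjoint_left]
    intro s hsx hsy
    have h1 := hTmem x hx s hsx
    have h2 := hTmem y hy s hsy
    have hlt1 := h1.2.1 y h2.1 (Ne.symm hxy)
    have hlt2 := h2.2.1 x h1.1 hxy
    omega
  have hTotcard : Total.card = (k+1).choose (d+1) + k.choose d * Vout.card := by
    have hsum : ∑ u ∈ Vout, (T u).card = ∑ u ∈ Vout, k.choose d :=
      Finset.sum_congr rfl hTcard
    rw [hTot, Finset.card_union_of_disjoint hdisj0, hT0card, Finset.card_biUnion hdisj,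
      hsum, Finset.sum_const, smul_eq_mul, mul_comm]
  -- relate to vertCount and fcount
  have hvc : Δ.vertCount = Vert.card := by
    rw [Cx.vertCount, Nat.card_eq_fintype_card, Fintype.card_subtype, hVert]
  have hVoutcard : Vout.card = Δ.vertCount - (k+1) := by
    rw [hVoutdef, Finset.card_sdiff_of_subset hσVert, hvc, hσ₀c]
  have hfc : Δ.fcount d = (Finset.univ.filter
      (fun s : Finset V => s ∈ Δ.faces ∧ s.card = d+1)).card := by
    rw [Cx.fcount, Nat.card_eq_fintype_card, Fintype.card_subtype]
  calc (k+1).choose (d+1) + k.choose d * (Δ.vertCount - (k+1))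
      = Total.card := by rw [hTotcard, hVoutcard]
    _ ≤ _ := by rw [hfc]; exact Finset.card_le_card hTotal_sub
end
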